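/- One-site marginal monotonicity: under the hypotheses of the abstract main theorem, for every t ≥ 0 and z ≥ 0, the probability that site z is occupied at time t is at least the probability that site z+1 is occupied at time t, i.e. P(ξ_t(z) = 1) ≥ P(ξ_t(z+1) = 1) when ξ_0 = 1_{(-∞,0]}. -/

import Mathlib

open MeasureTheory ProbabilityTheory

abbrev Config := ℤ → Bool
abbrev ConfigP := ℕ → Bool

/-- Stochastic order on measures: tested against bounded increasing measurable functions. -/
def StochLE {α : Type*} [MeasurableSpace α] [Preorder α] (μ ν : Measure α) : Prop :=
  ∀ f : α → ℝ, Measurable f → Monotone f → (∃ C, ∀ x, |f x| ≤ C) →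
    ∫ x, f x ∂μ ≤ ∫ x, f x ∂ν

/-- The step configuration `1_{(-∞,a]}`. -/
def step (a : ℤ) : Config := fun x => decide (x ≤ a)

/-- The restriction map `η ↦ η[z,∞)`. -/
def restrictFrom (z : ℤ) (η : Config) : ConfigP := fun n => η ((n : ℤ) + z)

/-- The shift `(τη)(x) = η(x+1)`. -/
def shiftτ (η : Config) : Config := fun x => η (x + 1)

lemma meas_shiftτ : Measurable shiftτ :=
  measurable_pi_lambda _ fun x => measurable_pi_apply (x + 1)

lemma meas_eval (z : ℤ) : MeasurableSet {η : Config | η z = true} :=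
  show MeasurableSet ((fun η : Config => η z) ⁻¹' {true}) from
    (measurable_pi_apply z) (measurableSet_singleton true)

theorem stmt6 (P : ℝ → Kernel Config Config) (hP : ∀ t, IsMarkovKernel (P t))
    (hattr : ∀ t, ∀ μ ν : Measure Config, IsProbabilityMeasure μ → IsProbabilityMeasure ν →
      StochLE μ ν → StochLE (μ.bind (P t)) (ν.bind (P t)))
    (hcov : ∀ t, ∀ μ : Measure Config, IsProbabilityMeasure μ →
      (μ.map shiftτ).bind (P t) = ((μ.bind (P t)).map shiftτ))
    (t : ℝ) (z : ℕ) :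
    ((Measure.dirac (step 0)).bind (P t)) {η : Config | η ((z : ℤ) + 1) = true}
      ≤ ((Measure.dirac (step 0)).bind (P t)) {η : Config | η (z : ℤ) = true} := by
  have hMP := hP t
  set μ0 : Measure Config := Measure.dirac (step 0) with hμ0
  have hprob0 : IsProbabilityMeasure μ0 := by infer_instance
  have hprobmap : IsProbabilityMeasure (μ0.map shiftτ) :=
    Measure.isProbabilityMeasure_map meas_shiftτ.aemeasurable
  -- stochastic domination at time 0
  have hle0 : StochLE (μ0.map shiftτ) μ0 := by
    intro f hf hmono _
    rw [hμ0, Measure.map_dirac' meas_shiftτ, integral_dirac, integral_dirac]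
    apply hmono
    intro x
    simp only [shiftτ, step]
    by_cases h : x + 1 ≤ 0
    · simp [h, show x ≤ 0 by omega]
    · simp [h]
  have hle : StochLE ((μ0.map shiftτ).bind (P t)) (μ0.bind (P t)) :=
    hattr t _ _ hprobmap hprob0 hle0
  rw [hcov t μ0 hprob0] at hle
  set μt : Measure Config := μ0.bind (P t) with hμt
  have hprobt : IsProbabilityMeasure μt := by
    constructor
    rw [hμt, Measure.bind_apply MeasurableSet.univ (Kernel.measurable (P t)).aemeasurable]
    simp
  -- test function
  set f : Config → ℝ := fun η => if η (z : ℤ) = true then 1 else 0 with hf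
  have hfm : Measurable f := by
    apply Measurable.ite (meas_eval (z : ℤ)) measurable_const measurable_const
  have hfmono : Monotone f := by
    intro a b hab
    simp only [hf]
    by_cases ha : a (z : ℤ) = true
    · have hb : b (z : ℤ) = true := le_antisymm (by simp) (ha ▸ hab (z : ℤ))
      simp [ha, hb]
    · by_cases hb : b (z : ℤ) = true <;> simp [ha, hb]
  have hfbd : ∃ C, ∀ x, |f x| ≤ C := ⟨1, fun x => by by_cases h : x (z : ℤ) = true <;> simp [hf, h]⟩
  have key := hle f hfm hfmono hfbd
  rw [integral_map meas_shiftτ.aemeasurable hfm.aestronglyMeasurable] at key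
  have hint : ∀ w : ℤ, ∫ η, (if η w = true then (1:ℝ) else 0) ∂μt
      = (μt {η : Config | η w = true}).toReal := by
    intro w
    rw [show (fun η : Config => if η w = true then (1:ℝ) else 0)
        = Set.indicator {η : Config | η w = true} 1 from by
          funext η; simp [Set.indicator_apply, Set.mem_setOf_eq],
      integral_indicator_one (meas_eval w)]
    rfl
  have hkey2 : (μt {η : Config | η ((z : ℤ) + 1) = true}).toReal
      ≤ (μt {η : Config | η (z : ℤ) = true}).toReal := by
    simp only [hf, shiftτ] at key
    rw [← hint, ← hint]
    exact key
  exact (ENNReal.toReal_le_toReal (measure_ne_top _ _) (measure_ne_top _ _)).mp hkey2
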